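/- For every integer k ≥ 3, the function g_k(x) = x f_{k−1}(x)/f_k(x) on (0, ∞) satisfies g_k(x) → k as x → 0⁺, and its derivative equals (1/x)·g_k(x)·(1 + g_{k−1}(x) − g_k(x)), which is positive; hence g_k is strictly increasing on (0, ∞). -/

import Mathlib

open Real Finset Filter

noncomputable def fTail (j : ℕ) (x : ℝ) : ℝ :=
  Real.exp x - ∑ i ∈ Finset.range j, x ^ i / (Nat.factorial i : ℝ)

lemma exp_eq_tsum' (x : ℝ) : Real.exp x = ∑' n : ℕ, x ^ n / n.factorial := by
  rw [Real.exp_eq_exp_ℝ, NormedSpace.exp_eq_tsum_div]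

lemma summable_c (x : ℝ) : Summable (fun n : ℕ => x ^ n / n.factorial) :=
  Real.summable_pow_div_factorial x

lemma summable_c_add (x : ℝ) (j : ℕ) : Summable (fun n : ℕ => x ^ (j + n) / (j + n).factorial) := by
  have := (summable_nat_add_iff (f := fun n : ℕ => x ^ n / n.factorial) j).2 (summable_c x)
  apply this.congr; intro n; simp [add_comm]

lemma fTail_eq_tsum (j : ℕ) (x : ℝ) :
    fTail j x = ∑' n : ℕ, x ^ (j + n) / (j + n).factorial := by
  have h := Summable.sum_add_tsum_nat_add (f := fun n : ℕ => x ^ n / n.factorial) j (summable_c x)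
  have e : ∑' n : ℕ, x ^ (n + j) / (n + j).factorial
      = ∑' n : ℕ, x ^ (j + n) / (j + n).factorial := by
    congr 1; ext n; rw [add_comm]
  simp only [fTail, exp_eq_tsum' x]
  linarith [h, e]

lemma fTail_succ (j : ℕ) (x : ℝ) :
    fTail j x = x ^ j / j.factorial + fTail (j + 1) x := by
  simp [fTail, Finset.sum_range_succ]; ring

lemma fTail_nonneg {x : ℝ} (hx : 0 ≤ x) (j : ℕ) : 0 ≤ fTail j x := by
  rw [fTail_eq_tsum]
  exact tsum_nonneg fun n => by positivity

lemma fTail_pos {x : ℝ} (hx : 0 < x) (j : ℕ) : 0 < fTail j x := by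
  have h1 : (0:ℝ) < x ^ j / j.factorial := by positivity
  have := fTail_nonneg hx.le (j + 1)
  rw [fTail_succ]; linarith

lemma fTail_zero {j : ℕ} (hj : 1 ≤ j) : fTail j 0 = 0 := by
  have : ∑ i ∈ Finset.range j, (0:ℝ) ^ i / (Nat.factorial i : ℝ) = 1 := by
    rw [Finset.sum_eq_single 0]
    · simp
    · intro i _ hi; simp [zero_pow hi]
    · intro h; simp at h; omega
  simp [fTail, this]

lemma hasDerivAt_fTail (j : ℕ) (x : ℝ) :
    HasDerivAt (fTail (j + 1)) (fTail j x) x := by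
  induction j with
  | zero =>
    have : fTail 1 = fun y => Real.exp y - 1 := by
      funext y; simp [fTail]
    rw [this]
    simpa [fTail] using (Real.hasDerivAt_exp x).sub_const 1
  | succ i ih =>
    have e : fTail (i + 2) = fun y => fTail (i + 1) y - y ^ (i+1) / (i+1).factorial := by
      funext y; rw [fTail_succ (i+1) y]; ring
    rw [e]
    have hp : HasDerivAt (fun y : ℝ => y ^ (i+1) / (i+1).factorial)
        (x ^ i / i.factorial) x := by
      have := (hasDerivAt_pow (i+1) x).div_const ((i+1).factorial : ℝ)
      refine this.congr_deriv ?_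
      rw [Nat.factorial_succ]
      push_cast
      field_simp
    have := ih.sub hp
    refine this.congr_deriv ?_
    rw [fTail_succ i x]; ring

lemma fact_ineq {j j' : ℕ} (h : j ≤ j') (n : ℕ) :
    (j + n).factorial * j'.factorial ≤ (j' + n).factorial * j.factorial := by
  induction n with
  | zero =>
    simpa [mul_comm] using Nat.mul_le_mul_left j'.factorial
      (Nat.factorial_le (le_refl j)) |>.trans
      (le_of_eq (by ring_nf))
  | succ n ih =>
    have h1 : (j + (n+1)).factorial = (j + n + 1) * (j + n).factorial := by
      rw [← Nat.add_assoc, Nat.factorial_succ]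
    have h2 : (j' + (n+1)).factorial = (j' + n + 1) * (j' + n).factorial := by
      rw [← Nat.add_assoc, Nat.factorial_succ]
    rw [h1, h2, mul_assoc, mul_assoc]
    calc (j + n + 1) * ((j + n).factorial * j'.factorial)
        ≤ (j + n + 1) * ((j' + n).factorial * j.factorial) := Nat.mul_le_mul_left _ ih
      _ ≤ (j' + n + 1) * ((j' + n).factorial * j.factorial) :=
          Nat.mul_le_mul_right _ (by omega)

lemma fact_ineq_strict {j j' : ℕ} (h : j < j') {n : ℕ} (hn : 1 ≤ n) :
    (j + n).factorial * j'.factorial < (j' + n).factorial * j.factorial := by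
  obtain ⟨m, rfl⟩ := Nat.exists_eq_add_of_le hn
  have h1 : (j + (1 + m)).factorial = (j + m + 1) * (j + m).factorial := by
    rw [show j + (1+m) = j + m + 1 by omega, Nat.factorial_succ]
  have h2 : (j' + (1 + m)).factorial = (j' + m + 1) * (j' + m).factorial := by
    rw [show j' + (1+m) = j' + m + 1 by omega, Nat.factorial_succ]
  rw [h1, h2, mul_assoc, mul_assoc]
  have ih := fact_ineq h.le m
  have hpos : 0 < (j' + m).factorial * j.factorial := by positivity
  calc (j + m + 1) * ((j + m).factorial * j'.factorial)
      ≤ (j + m + 1) * ((j' + m).factorial * j.factorial) := Nat.mul_le_mul_left _ ih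
    _ < (j' + m + 1) * ((j' + m).factorial * j.factorial) :=
        Nat.mul_lt_mul_of_lt_of_le (by omega) (le_refl _) hpos

lemma termwise {x : ℝ} (hx : 0 < x) {j j' : ℕ} (h : j < j') :
    fTail j' x * (x ^ j / j.factorial) < fTail j x * (x ^ j' / j'.factorial) := by
  rw [fTail_eq_tsum, fTail_eq_tsum, ← tsum_mul_right, ← tsum_mul_right]
  apply Summable.tsum_lt_tsum_of_nonneg (i := 1)
  · intro n; positivity
  · intro n
    have hfact := fact_ineq h.le n
    have key : x ^ (j' + n) / ((j' + n).factorial : ℝ) * (x ^ j / j.factorial)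
        = x ^ (j + j' + n) / (((j' + n).factorial : ℝ) * j.factorial) := by
      rw [div_mul_div_comm, ← pow_add]; ring_nf
    have key2 : x ^ (j + n) / ((j + n).factorial : ℝ) * (x ^ j' / j'.factorial)
        = x ^ (j + j' + n) / (((j + n).factorial : ℝ) * j'.factorial) := by
      rw [div_mul_div_comm, ← pow_add]; ring_nf
    rw [key, key2]
    apply div_le_div_of_nonneg_left (by positivity) (by positivity)
    exact_mod_cast hfact
  · have hfact := fact_ineq_strict h (le_refl 1)
    have key : x ^ (j' + 1) / ((j' + 1).factorial : ℝ) * (x ^ j / j.factorial)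
        = x ^ (j + j' + 1) / (((j' + 1).factorial : ℝ) * j.factorial) := by
      rw [div_mul_div_comm, ← pow_add]; ring_nf
    have key2 : x ^ (j + 1) / ((j + 1).factorial : ℝ) * (x ^ j' / j'.factorial)
        = x ^ (j + j' + 1) / (((j + 1).factorial : ℝ) * j'.factorial) := by
      rw [div_mul_div_comm, ← pow_add]; ring_nf
    rw [key, key2]
    apply div_lt_div_of_pos_left (by positivity) (by positivity)
    exact_mod_cast hfact
  · exact (summable_c_add x j).mul_right _

lemma psi_lemma (i : ℕ) {x : ℝ} (hx : 0 < x) :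
    fTail (i+1) x * fTail (i+3) x < fTail (i+2) x ^ 2 := by
  set Ψ : ℝ → ℝ := fun t => fTail (i+2) t ^ 2 - fTail (i+1) t * fTail (i+3) t with hΨ
  have hderiv : ∀ t : ℝ, HasDerivAt Ψ
      (fTail (i+1) t * fTail (i+2) t - fTail i t * fTail (i+3) t) t := by
    intro t
    have h2 := hasDerivAt_fTail (i+1) t
    have h1 := hasDerivAt_fTail i t
    have h3 := hasDerivAt_fTail (i+2) t
    have := ((h2.pow 2).sub (h1.mul h3))
    refine this.congr_deriv ?_
    ring
  have hderivpos : ∀ t : ℝ, 0 < t →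
      0 < fTail (i+1) t * fTail (i+2) t - fTail i t * fTail (i+3) t := by
    intro t ht
    have htw := termwise ht (show i < i + 2 by omega)
    have e1 : fTail i t = t ^ i / i.factorial + fTail (i+1) t := fTail_succ i t
    have e2 : fTail (i+2) t = t ^ (i+2) / (i+2).factorial + fTail (i+3) t :=
      fTail_succ (i+2) t
    have key : fTail (i+1) t * fTail (i+2) t - fTail i t * fTail (i+3) t
        = fTail i t * (t ^ (i+2) / (i+2).factorial)
          - fTail (i+2) t * (t ^ i / i.factorial) := by
      linear_combination (-(fTail (i+2) t)) * e1 + (fTail i t) * e2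
    rw [key]
    linarith
  have hmono : StrictMonoOn Ψ (Set.Ici 0) := by
    apply strictMonoOn_of_deriv_pos (convex_Ici 0)
    · exact fun t _ => ((hderiv t).continuousAt).continuousWithinAt
    · intro t ht
      rw [interior_Ici] at ht
      rw [(hderiv t).deriv]
      exact hderivpos t ht
  have h0 : Ψ 0 = 0 := by
    simp [hΨ, fTail_zero (show 1 ≤ i + 2 by omega), fTail_zero (show 1 ≤ i + 1 by omega),
      fTail_zero (show 1 ≤ i + 3 by omega)]
  have := hmono (Set.self_mem_Ici) (Set.mem_Ici.2 hx.le) hx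
  rw [h0] at this
  have h2 : (0:ℝ) < fTail (i+2) x ^ 2 - fTail (i+1) x * fTail (i+3) x := this
  linarith

lemma fTail_le {x : ℝ} (hx : 0 ≤ x) (j : ℕ) :
    fTail j x ≤ Real.exp x * (x ^ j / j.factorial) := by
  rw [fTail_eq_tsum, exp_eq_tsum', ← tsum_mul_right]
  apply Summable.tsum_le_tsum _ (summable_c_add x j) ((summable_c x).mul_right _)
  intro n
  have hdvd : (j.factorial * n.factorial : ℕ) ∣ (j + n).factorial := by
    simpa using Nat.factorial_mul_factorial_dvd_factorial_add j n
  have hle : (j.factorial * n.factorial : ℕ) ≤ (j + n).factorial :=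
    Nat.le_of_dvd (Nat.factorial_pos _) hdvd
  have e : x ^ n / (n.factorial : ℝ) * (x ^ j / j.factorial)
      = x ^ (j + n) / ((n.factorial : ℝ) * j.factorial) := by
    rw [div_mul_div_comm, ← pow_add]; ring_nf
  rw [e]
  apply div_le_div_of_nonneg_left (by positivity) (by positivity)
  calc ((j+n).factorial : ℝ) ≥ ((j.factorial * n.factorial : ℕ) : ℝ) := by exact_mod_cast hle
    _ = (n.factorial : ℝ) * j.factorial := by push_cast; ring

lemma summable_fTail {x : ℝ} (hx : 0 ≤ x) (j : ℕ) :
    Summable (fun m : ℕ => fTail (j + m) x) := by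
  apply Summable.of_nonneg_of_le (fun m => fTail_nonneg hx _)
    (fun m => fTail_le hx (j + m))
  exact ((summable_c_add x j).mul_left (Real.exp x))

lemma fTail_sub (j m : ℕ) (x : ℝ) :
    fTail (j + m) x = fTail j x - ∑ n ∈ Finset.range m, x ^ (j + n) / (j + n).factorial := by
  simp only [fTail, Finset.sum_range_add]
  ring

lemma tsum_fTail (j : ℕ) {x : ℝ} (hx : 0 ≤ x) :
    ∑' m : ℕ, fTail (j + m) x
      = ∑' n : ℕ, ((n : ℝ) + 1) * (x ^ (j + n) / (j + n).factorial) := by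
  classical
  set a : ℕ → ℝ := fun n => x ^ (j + n) / (j + n).factorial with ha
  set G : ℕ × ℕ → ℝ := fun p => if p.1 ≤ p.2 then a p.2 else 0 with hG
  have ha_nonneg : ∀ n, 0 ≤ a n := fun n => by positivity
  have hG_nonneg : ∀ p, 0 ≤ G p := by
    intro p; by_cases h : p.1 ≤ p.2 <;> simp [hG, h, ha_nonneg]
  -- injection
  set e : ℕ × ℕ → ℕ × ℕ := fun q => (q.1, q.1 + q.2) with he
  have einj : Function.Injective e := by
    intro q q' h
    simp only [he, Prod.mk.injEq] at h
    obtain ⟨h1, h2⟩ := h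
    exact Prod.ext h1 (by omega)
  have hGe : ∀ q : ℕ × ℕ, (G ∘ e) q = a (q.1 + q.2) := by
    intro q; simp [hG, he]
  have hbound : ∀ q : ℕ × ℕ, a (q.1 + q.2)
      ≤ (x ^ (j + q.1) / (j + q.1).factorial) * (x ^ q.2 / q.2.factorial) := by
    intro q
    have hdvd : ((j + q.1).factorial * q.2.factorial : ℕ) ∣ (j + q.1 + q.2).factorial :=
      Nat.factorial_mul_factorial_dvd_factorial_add _ _
    have hle : ((j + q.1).factorial * q.2.factorial : ℕ) ≤ (j + q.1 + q.2).factorial :=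
      Nat.le_of_dvd (Nat.factorial_pos _) hdvd
    have e1 : x ^ (j + q.1) / ((j + q.1).factorial : ℝ) * (x ^ q.2 / q.2.factorial)
        = x ^ (j + (q.1 + q.2)) / (((j + q.1).factorial : ℝ) * q.2.factorial) := by
      rw [div_mul_div_comm, ← pow_add]; ring_nf
    have hle' : ((j + q.1).factorial * q.2.factorial : ℕ) ≤ (j + (q.1 + q.2)).factorial := by
      rw [← Nat.add_assoc]; exact hle
    rw [ha, e1]
    apply div_le_div_of_nonneg_left (by positivity) (by positivity)
    · exact_mod_cast hle'
  have hsum2 : Summable (fun q : ℕ × ℕ =>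
      (x ^ (j + q.1) / ((j + q.1).factorial : ℝ)) * (x ^ q.2 / q.2.factorial)) :=
    (summable_c_add x j).mul_of_nonneg (summable_c x)
      (fun n => by positivity) (fun n => by positivity)
  have hGesum : Summable (G ∘ e) := by
    apply Summable.of_nonneg_of_le (fun q => by rw [hGe]; exact ha_nonneg _)
      (fun q => by rw [hGe]; exact hbound q) hsum2
  have hGsum : Summable G := by
    refine (einj.summable_iff ?_).1 hGesum
    intro p hp
    by_cases h : p.1 ≤ p.2
    · exfalso; exact hp ⟨(p.1, p.2 - p.1), by simp [he]; exact Prod.ext rfl (by omega)⟩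
    · simp [hG, h]
  -- rows
  have hrow_split : ∀ m n, G (m, n) = a n - (if n < m then a n else 0) := by
    intro m n
    by_cases h : m ≤ n
    · simp [hG, h, show ¬ n < m by omega]
    · simp [hG, h, show n < m by omega]
  have hfin : ∀ m : ℕ, Summable (fun n => if n < m then a n else 0) := by
    intro m
    apply summable_of_ne_finset_zero (s := Finset.range m)
    intro n hn; simp at hn; simp [hn, show ¬ n < m by omega]
  have hrow_summable : ∀ m, Summable (fun n => G (m, n)) := by
    intro m
    have : (fun n => G (m, n)) = fun n => a n - (if n < m then a n else 0) := by
      funext n; exact hrow_split m n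
    rw [this]
    exact (summable_c_add x j).sub (hfin m)
  have hrow : ∀ m, ∑' n, G (m, n) = fTail (j + m) x := by
    intro m
    have e1 : ∑' n, G (m, n) = (∑' n, a n) - ∑' n, (if n < m then a n else 0) := by
      rw [← Summable.tsum_sub (summable_c_add x j) (hfin m)]
      exact tsum_congr (hrow_split m)
    have e2 : ∑' n, (if n < m then a n else 0) = ∑ n ∈ Finset.range m, a n := by
      rw [tsum_eq_sum (s := Finset.range m)]
      · apply Finset.sum_congr rfl; intro n hn; simp at hn; simp [hn]
      · intro n hn; simp at hn; simp [show ¬ n < m by omega]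
    rw [e1, e2, ← fTail_eq_tsum, fTail_sub j m x]
  -- columns
  have hcol : ∀ n, ∑' m, G (m, n) = ((n : ℝ) + 1) * a n := by
    intro n
    rw [tsum_eq_sum (s := Finset.range (n + 1))]
    · have : ∀ m ∈ Finset.range (n + 1), G (m, n) = a n := by
        intro m hm; simp at hm; simp [hG, show m ≤ n by omega]
      rw [Finset.sum_congr rfl this, Finset.sum_const, Finset.card_range]
      push_cast; ring
    · intro m hm; simp at hm; simp [hG, show ¬ m ≤ n by omega]
  have hcol_summable : ∀ n, Summable (fun m => G (m, n)) := by
    intro n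
    apply summable_of_ne_finset_zero (s := Finset.range (n + 1))
    intro m hm; simp at hm; simp [hG, show ¬ m ≤ n by omega]
  have hcomm : ∑' (n : ℕ) (m : ℕ), G (m, n) = ∑' (m : ℕ) (n : ℕ), G (m, n) := by
    have hu : Summable (Function.uncurry fun m n => G (m, n)) := by
      apply hGsum.congr; intro p; rfl
    exact Summable.tsum_comm' hu hrow_summable hcol_summable
  calc ∑' m, fTail (j + m) x = ∑' (m) (n), G (m, n) := by
        exact tsum_congr fun m => (hrow m).symm
    _ = ∑' (n) (m), G (m, n) := hcomm.symm
    _ = ∑' n : ℕ, ((n : ℝ) + 1) * a n := tsum_congr hcol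

lemma xf_identity (j : ℕ) {x : ℝ} (hx : 0 ≤ x) :
    x * fTail j x = (j : ℝ) * fTail (j + 1) x + ∑' m : ℕ, fTail (j + 1 + m) x := by
  have hterm : ∀ n : ℕ, x * (x ^ (j + n) / (j + n).factorial)
      = ((j : ℝ) + n + 1) * (x ^ (j + 1 + n) / (j + 1 + n).factorial) := by
    intro n
    have hfact : ((j + 1 + n).factorial : ℝ) = ((j : ℝ) + n + 1) * (j + n).factorial := by
      rw [show j + 1 + n = (j + n) + 1 by omega, Nat.factorial_succ]; push_cast; ring
    have hpow : x ^ (j + 1 + n) = x * x ^ (j + n) := by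
      rw [show j + 1 + n = (j + n) + 1 by omega, pow_succ]; ring
    have hfp : ((j + n).factorial : ℝ) ≠ 0 := by positivity
    have hjn : ((j : ℝ) + n + 1) ≠ 0 := by positivity
    rw [hpow, hfact]
    field_simp
  have L : x * fTail j x = ∑' n : ℕ, ((j : ℝ) + n + 1) * (x ^ (j + 1 + n) / (j + 1 + n).factorial) := by
    rw [fTail_eq_tsum, ← tsum_mul_left]
    exact tsum_congr hterm
  have h1 : Summable (fun n : ℕ => (j : ℝ) * (x ^ (j + 1 + n) / (j + 1 + n).factorial)) :=
    (summable_c_add x (j+1)).mul_left _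
  have h2 : Summable (fun n : ℕ => ((n : ℝ) + 1) * (x ^ (j + 1 + n) / (j + 1 + n).factorial)) := by
    have := summable_c_add x j
    have : (fun n : ℕ => ((n : ℝ) + 1) * (x ^ (j + 1 + n) / (j + 1 + n).factorial))
        = fun n : ℕ => x ^ (j + n) / (j + n).factorial * x - (j:ℝ) * (x ^ (j + 1 + n) / (j + 1 + n).factorial) := by
      funext n
      have := hterm n
      linarith [hterm n]
    rw [this]
    exact ((summable_c_add x j).mul_right x).sub h1
  have R : (j : ℝ) * fTail (j + 1) x + ∑' m : ℕ, fTail (j + 1 + m) x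
      = ∑' n : ℕ, ((j : ℝ) + n + 1) * (x ^ (j + 1 + n) / (j + 1 + n).factorial) := by
    rw [tsum_fTail (j + 1) hx, fTail_eq_tsum (j + 1) x, ← tsum_mul_left, ← Summable.tsum_add h1 h2]
    exact tsum_congr fun n => by ring
  rw [L, R]

lemma chain_lemma (K : ℕ) {x : ℝ} (hx : 0 < x) :
    ∀ m : ℕ, fTail (K+2) x * fTail (K+3+m) x ≤ fTail (K+3) x * fTail (K+2+m) x := by
  intro m
  induction m with
  | zero => simp [mul_comm]
  | succ m ih =>
    have hpsi := psi_lemma (K + m + 1) hx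
    -- fTail (K+m+2) * fTail (K+m+4) < fTail (K+m+3) ^ 2
    have h1 : fTail (K+2) x * fTail (K+3+(m+1)) x * fTail (K+3+m) x
        ≤ fTail (K+3) x * fTail (K+2+(m+1)) x * fTail (K+3+m) x := by
      have e1 : K+3+(m+1) = K+m+4 := by omega
      have e2 : K+2+(m+1) = K+m+3 := by omega
      have e3 : K+3+m = K+m+3 := by omega
      have e4 : K+2+m = K+m+2 := by omega
      rw [e1, e2, e3]
      have ih' : fTail (K+2) x * fTail (K+m+3) x ≤ fTail (K+3) x * fTail (K+m+2) x := by
        rw [← e3, ← e4]; exact ih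
      have hp2 : (0:ℝ) ≤ fTail (K+2) x := (fTail_pos hx _).le
      have hp3 : (0:ℝ) ≤ fTail (K+3) x := (fTail_pos hx _).le
      have hpm4 : (0:ℝ) ≤ fTail (K+m+4) x := (fTail_pos hx _).le
      nlinarith [hpsi, ih', fTail_pos hx (K+m+2), fTail_pos hx (K+m+3)]
    have hpos : (0:ℝ) < fTail (K+3+m) x := fTail_pos hx _
    exact le_of_mul_le_mul_right h1 hpos

lemma main_ineq (K : ℕ) {x : ℝ} (hx : 0 < x) :
    x * fTail (K+2) x ^ 2
      < fTail (K+2) x * fTail (K+3) x + x * fTail (K+1) x * fTail (K+3) x := by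
  set S : ℝ := ∑' m : ℕ, fTail (K+3+m) x with hS
  have id1 : x * fTail (K+2) x = ((K:ℝ)+2) * fTail (K+3) x + S := by
    have := xf_identity (K+2) hx.le
    push_cast at this ⊢
    convert this using 3 <;> omega
  have id2 : x * fTail (K+1) x = ((K:ℝ)+1) * fTail (K+2) x + ∑' m : ℕ, fTail (K+2+m) x := by
    have := xf_identity (K+1) hx.le
    push_cast at this ⊢
    convert this using 3 <;> omega
  have id3 : ∑' m : ℕ, fTail (K+2+m) x = fTail (K+2) x + S := by
    have hsum : Summable (fun m : ℕ => fTail (K+2+m) x) := by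
      have := summable_fTail hx.le (K+2)
      exact this.congr (fun m => rfl)
    rw [Summable.tsum_eq_zero_add hsum]
    have htail : ∑' (b : ℕ), fTail (K+2+(b+1)) x = S := by
      rw [hS]; apply tsum_congr; intro b; congr 1; omega
    rw [htail]
  -- core : fTail (K+2) x * S < fTail (K+2) x * fTail (K+3) x + fTail (K+3) x * S
  have core : fTail (K+2) x * S < fTail (K+3) x * (fTail (K+2) x + S) := by
    have hsum3 : Summable (fun m : ℕ => fTail (K+3) x * fTail (K+2+m) x) := by
      have := (summable_fTail hx.le (K+2)).mul_left (fTail (K+3) x)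
      exact this.congr (fun m => rfl)
    have lhs_eq : fTail (K+2) x * S = ∑' m : ℕ, fTail (K+2) x * fTail (K+3+m) x := by
      rw [hS, tsum_mul_left]
    have rhs_eq : fTail (K+3) x * (fTail (K+2) x + S)
        = ∑' m : ℕ, fTail (K+3) x * fTail (K+2+m) x := by
      rw [Summable.tsum_eq_zero_add hsum3]
      have htail : ∑' (b : ℕ), fTail (K+3) x * fTail (K+2+(b+1)) x = fTail (K+3) x * S := by
        rw [hS, tsum_mul_left]; congr 1; apply tsum_congr; intro b; congr 1; omega
      rw [htail]
      norm_num
      ring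
    rw [lhs_eq, rhs_eq]
    apply Summable.tsum_lt_tsum_of_nonneg (i := 1)
    · intro m; have := fTail_pos hx (K+2); have := fTail_pos hx (K+3+m); positivity
    · intro m; exact chain_lemma K hx m
    · have hpsi := psi_lemma (K+1) hx
      have e1 : K+3+1 = K+4 := by omega
      have e2 : K+2+1 = K+3 := by omega
      rw [e1, e2]
      have e3 : K+1+1 = K+2 := by omega
      have e4 : K+1+2 = K+3 := by omega
      have e5 : K+1+3 = K+4 := by omega
      rw [e3, e4, e5] at hpsi
      nlinarith [hpsi]
    · exact hsum3
  nlinarith [core, id1, id2, id3, fTail_pos hx (K+2), fTail_pos hx (K+3)]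

noncomputable def gFun (k : ℕ) (x : ℝ) : ℝ := x * fTail (k - 1) x / fTail k x

lemma gFun_deriv (K : ℕ) {x : ℝ} (hx : 0 < x) :
    HasDerivAt (gFun (K+3))
      (1 / x * gFun (K+3) x * (1 + gFun (K+3-1) x - gFun (K+3) x)) x ∧
    0 < 1 / x * gFun (K+3) x * (1 + gFun (K+3-1) x - gFun (K+3) x) := by
  have e1 : K + 3 - 1 = K + 2 := by omega
  have e2 : K + 2 - 1 = K + 1 := by omega
  have hf1 := fTail_pos hx (K+1)
  have hf2 := fTail_pos hx (K+2)
  have hf3 := fTail_pos hx (K+3)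
  have hgval : gFun (K+3) x = x * fTail (K+2) x / fTail (K+3) x := by
    rw [gFun, e1]
  have hgval2 : gFun (K+3-1) x = x * fTail (K+1) x / fTail (K+2) x := by
    rw [e1, gFun, e2]
  set D : ℝ := 1 / x * gFun (K+3) x * (1 + gFun (K+3-1) x - gFun (K+3) x) with hD
  have hQeq : D = ((1 * fTail (K+2) x + x * fTail (K+1) x) * fTail (K+3) x
      - x * fTail (K+2) x * fTail (K+2) x) / (fTail (K+3) x) ^ 2 := by
    rw [hD, hgval, hgval2]
    field_simp
  have hpos : 0 < D := by
    rw [hQeq]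
    apply div_pos _ (by positivity)
    have := main_ineq K hx
    nlinarith [this]
  constructor
  · have hgfun : gFun (K+3) = fun y => y * fTail (K+2) y / fTail (K+3) y := by
      funext y; rw [gFun, e1]
    rw [hgfun]
    have hnum : HasDerivAt (fun y : ℝ => y * fTail (K+2) y)
        (1 * fTail (K+2) x + x * fTail (K+1) x) x :=
      (hasDerivAt_id x).mul (hasDerivAt_fTail (K+1) x)
    have hden := hasDerivAt_fTail (K+2) x
    have hdiv := hnum.div hden hf3.ne'
    rw [hQeq]
    exact hdiv
  · exact hpos

lemma tendsto_ratio (j : ℕ) :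
    Tendsto (fun x : ℝ => fTail j x / x ^ j) (nhdsWithin 0 (Set.Ioi 0))
      (nhds (1 / j.factorial)) := by
  have hzero : Tendsto (fun x : ℝ => fTail (j+1) x / x ^ j) (nhdsWithin 0 (Set.Ioi 0))
      (nhds 0) := by
    apply squeeze_zero' (f := fun x : ℝ => fTail (j+1) x / x ^ j)
      (g := fun x : ℝ => Real.exp x * x / (j+1).factorial)
    · filter_upwards [self_mem_nhdsWithin] with x hx
      have hx' : (0:ℝ) < x := hx
      exact div_nonneg (fTail_nonneg hx'.le _) (by positivity)
    · filter_upwards [self_mem_nhdsWithin] with x hx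
      have hx' : (0:ℝ) < x := hx
      have hb := fTail_le hx'.le (j+1)
      rw [div_le_iff₀ (by positivity)]
      calc fTail (j+1) x ≤ Real.exp x * (x ^ (j+1) / (j+1).factorial) := hb
        _ = Real.exp x * x / (j+1).factorial * x ^ j := by rw [pow_succ]; ring
    · have hcont : Tendsto (fun x : ℝ => Real.exp x * x / (j+1).factorial)
          (nhds 0) (nhds 0) := by
        have : Continuous (fun x : ℝ => Real.exp x * x / (j+1).factorial) := by
          continuity
        have h0 : Real.exp 0 * 0 / ((j+1).factorial : ℝ) = 0 := by simp
        simpa [h0] using this.tendsto 0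
      exact hcont.mono_left nhdsWithin_le_nhds
  have hmain : Tendsto (fun x : ℝ => 1 / (j.factorial : ℝ) + fTail (j+1) x / x ^ j)
      (nhdsWithin 0 (Set.Ioi 0)) (nhds (1 / j.factorial)) := by
    have := (tendsto_const_nhds (x := (1:ℝ)/j.factorial)
        (f := nhdsWithin (0:ℝ) (Set.Ioi 0))).add hzero
    simpa using this
  apply hmain.congr'
  filter_upwards [self_mem_nhdsWithin] with x hx
  have hx' : (0:ℝ) < x := hx
  have hxj : x ^ j ≠ 0 := by positivity
  rw [fTail_succ j x]
  field_simp

lemma gFun_tendsto (K : ℕ) :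
    Tendsto (gFun (K+3)) (nhdsWithin 0 (Set.Ioi 0)) (nhds ((K:ℝ)+3)) := by
  have h1 := tendsto_ratio (K+2)
  have h2 := tendsto_ratio (K+3)
  have hne : (1 : ℝ) / (K+3).factorial ≠ 0 := by positivity
  have hdiv := h1.div h2 hne
  have hval : (1 / ((K+2).factorial : ℝ)) / (1 / ((K+3).factorial : ℝ)) = (K:ℝ)+3 := by
    have hfact : ((K+3).factorial : ℝ) = ((K:ℝ)+3) * (K+2).factorial := by
      rw [show K+3 = (K+2)+1 by omega, Nat.factorial_succ]; push_cast; ring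
    have hf2 : ((K+2).factorial : ℝ) ≠ 0 := by positivity
    have hk3 : ((K:ℝ)+3) ≠ 0 := by positivity
    rw [hfact]
    field_simp
  rw [hval] at hdiv
  apply hdiv.congr'
  filter_upwards [self_mem_nhdsWithin] with x hx
  have hx' : (0:ℝ) < x := hx
  have e1 : K + 3 - 1 = K + 2 := by omega
  rw [gFun, e1]
  have hf3 := fTail_pos hx' (K+3)
  have hxp : x ^ (K+2) ≠ 0 := by positivity
  have hxp3 : x ^ (K+3) ≠ 0 := by positivity
  rw [Pi.div_apply]
  field_simp
  rw [show K+3 = (K+2)+1 by omega, pow_succ]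
  ring

/-- for `k ≥ 3`, `g_k(x) = x f_{k-1}(x)/f_k(x)` satisfies `g_k(x) → k` as
`x → 0⁺`; its derivative equals `(1/x) g_k(x) (1 + g_{k-1}(x) − g_k(x))`, which is
positive; hence `g_k` is strictly increasing on `(0, ∞)`. -/
theorem gFun_limit_deriv_strictMono (k : ℕ) (hk : 3 ≤ k) :
    Tendsto (gFun k) (nhdsWithin 0 (Set.Ioi 0)) (nhds (k : ℝ)) ∧
    (∀ x : ℝ, 0 < x →
      HasDerivAt (gFun k) (1 / x * gFun k x * (1 + gFun (k - 1) x - gFun k x)) x ∧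
      0 < 1 / x * gFun k x * (1 + gFun (k - 1) x - gFun k x)) ∧
    StrictMonoOn (gFun k) (Set.Ioi 0) := by
  obtain ⟨K, rfl⟩ : ∃ K, k = K + 3 := ⟨k - 3, by omega⟩
  refine ⟨?_, fun x hx => gFun_deriv K hx, ?_⟩
  · have := gFun_tendsto K
    convert this using 2
    push_cast; ring
  · apply strictMonoOn_of_deriv_pos (convex_Ioi 0)
    · intro t ht
      exact ((gFun_deriv K (Set.mem_Ioi.1 ht)).1.continuousAt).continuousWithinAt
    · intro t ht
      rw [interior_Ioi] at ht
      have h := gFun_deriv K (Set.mem_Ioi.1 ht)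
      rw [h.1.deriv]
      exact h.2
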